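/- (Mixture entropy bound for Rényi-1/2 entropy) Let ρ̄ = ∑_{λ} φ_λ |φ_λ⟩⟨φ_λ| be a mixture of (not necessarily orthogonal) pure states with probability weights φ_λ. Then the Rényi entropy of order 1/2 of the density matrix ρ̄ is at most the classical Rényi-1/2 entropy of the weights: H_{1/2}(ρ̄) ≤ H_{1/2}(φ), where H_{1/2}(ρ) = 2 log₂ Tr√ρ for a density matrix and H_{1/2}(p) = 2 log₂ ∑_λ √p_λ for a probability vector. -/

import Mathlib

open Matrix
open scoped ComplexOrder

/-- Positive semidefinite square root (for PSD inputs): `(AᴴA)^{1/4}`, which equals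
`√A` whenever `A` is positive semidefinite. -/
noncomputable def hermSqrtOld {n : Type*} [Fintype n] [DecidableEq n]
    {A : Matrix n n ℂ} (hA : A.IsHermitian) : Matrix n n ℂ :=
  (hA.eigenvectorUnitary : Matrix n n ℂ) * diagonal ((↑) ∘ (√·) ∘ hA.eigenvalues) *
    (star hA.eigenvectorUnitary : Matrix n n ℂ)

theorem hermSqrtOld_isHermitian {n : Type*} [Fintype n] [DecidableEq n]
    {A : Matrix n n ℂ} (hA : A.IsHermitian) : (hermSqrtOld hA).IsHermitian := by
  unfold hermSqrtOld
  have hD : (diagonal (((↑) ∘ (√·) ∘ hA.eigenvalues) : n → ℂ)).IsHermitian := by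
    refine isHermitian_diagonal_of_self_adjoint _ ?_
    ext i
    simp
  simpa [star_eq_conjTranspose] using
    isHermitian_mul_mul_conjTranspose (hA.eigenvectorUnitary : Matrix n n ℂ) hD

noncomputable def msqrt {n : Type*} [Fintype n] [DecidableEq n]
    (A : Matrix n n ℂ) : Matrix n n ℂ :=
  hermSqrtOld (hermSqrtOld_isHermitian (Matrix.posSemidef_conjTranspose_mul_self A).1)

/-- Rényi entropy of order `1/2` of a density matrix: `H_{1/2}(ρ) = 2 log₂ Tr √ρ`. -/
noncomputable def renyiHalf {n : Type*} [Fintype n] [DecidableEq n]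
    (ρ : Matrix n n ℂ) : ℝ :=
  2 * Real.logb 2 (((msqrt ρ).trace).re)

namespace Matrix.PosSemidef

section PortSqrt

open scoped MatrixOrder

variable {n : Type*} [Fintype n] [DecidableEq n]

/-- The old `Matrix.PosSemidef.sqrt`. -/
noncomputable def sqrt {A : Matrix n n ℂ} (hA : A.PosSemidef) : Matrix n n ℂ :=
  hermSqrtOld hA.1

lemma posSemidef_sqrt {A : Matrix n n ℂ} (hA : A.PosSemidef) : hA.sqrt.PosSemidef := by
  unfold sqrt hermSqrtOld
  have hD : (diagonal (((↑) ∘ (√·) ∘ hA.1.eigenvalues) : n → ℂ)).PosSemidef := by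
    refine posSemidef_diagonal_iff.mpr fun i => ?_
    simp only [Function.comp_apply]
    exact_mod_cast Real.sqrt_nonneg _
  simpa [star_eq_conjTranspose] using
    hD.mul_mul_conjTranspose_same (hA.1.eigenvectorUnitary : Matrix n n ℂ)

lemma sqrt_mul_self {A : Matrix n n ℂ} (hA : A.PosSemidef) : hA.sqrt * hA.sqrt = A := by
  unfold sqrt hermSqrtOld
  set U : Matrix n n ℂ := (hA.1.eigenvectorUnitary : Matrix n n ℂ) with hUdef
  have hU : star U * U = 1 := Matrix.mem_unitaryGroup_iff'.mp hA.1.eigenvectorUnitary.2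
  have hspec : A = U * diagonal (Complex.ofReal ∘ hA.1.eigenvalues) * star U :=
    hA.1.spectral_theorem
  calc U * diagonal (((↑) ∘ (√·) ∘ hA.1.eigenvalues) : n → ℂ) * star U *
        (U * diagonal (((↑) ∘ (√·) ∘ hA.1.eigenvalues) : n → ℂ) * star U)
      = U * diagonal (((↑) ∘ (√·) ∘ hA.1.eigenvalues) : n → ℂ) * (star U * U) *
        diagonal (((↑) ∘ (√·) ∘ hA.1.eigenvalues) : n → ℂ) * star U := by
        simp only [Matrix.mul_assoc]
    _ = U * diagonal (Complex.ofReal ∘ hA.1.eigenvalues) * star U := by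
        have hd : (fun i => (((↑) ∘ (√·) ∘ hA.1.eigenvalues) : n → ℂ) i *
            (((↑) ∘ (√·) ∘ hA.1.eigenvalues) : n → ℂ) i) = Complex.ofReal ∘ hA.1.eigenvalues := by
          funext i
          simp only [Function.comp_apply]
          rw [← Complex.ofReal_mul, Real.mul_self_sqrt (hA.eigenvalues_nonneg i)]
        rw [hU, Matrix.mul_one, Matrix.mul_assoc U, Matrix.diagonal_mul_diagonal, hd]
    _ = A := hspec.symm

lemma sqrt_eq_cfcSqrt {A : Matrix n n ℂ} (hA : A.PosSemidef) : hA.sqrt = CFC.sqrt A :=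
  (CFC.sqrt_unique (sqrt_mul_self hA) (nonneg_iff_posSemidef.mpr (posSemidef_sqrt hA))).symm

lemma eq_sqrt_of_sq_eq {A : Matrix n n ℂ} (hA : A.PosSemidef) {B : Matrix n n ℂ}
    (hB : B.PosSemidef) (hAB : A ^ 2 = B) : A = hB.sqrt := by
  rw [sqrt_eq_cfcSqrt hB]
  exact (CFC.sqrt_unique (by rw [← hAB, sq]) (nonneg_iff_posSemidef.mpr hA)).symm

end PortSqrt

end Matrix.PosSemidef

namespace RenyiAux

variable {m n : Type*} [Fintype m] [DecidableEq m] [Fintype n] [DecidableEq n]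

lemma sqrt_congr {A B : Matrix n n ℂ} (h : A = B) (hA : A.PosSemidef) (hB : B.PosSemidef) :
    hA.sqrt = hB.sqrt := by subst h; rfl

lemma trace_unitary_diag (U : Matrix.unitaryGroup n ℂ) (f : n → ℝ) :
    ((U : Matrix n n ℂ) * diagonal (Complex.ofReal ∘ f) * star (U : Matrix n n ℂ)).trace
      = ∑ i, (f i : ℂ) := by
  rw [Matrix.trace_mul_cycle, Matrix.mem_unitaryGroup_iff'.mp U.2, Matrix.one_mul,
    Matrix.trace_diagonal]
  rfl

/-- trace of sqrt equals sum of sqrt eigenvalues -/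
lemma trace_sqrt_eq {A : Matrix n n ℂ} (hA : A.PosSemidef) :
    hA.sqrt.trace = ∑ i, (Real.sqrt (hA.1.eigenvalues i) : ℂ) :=
  trace_unitary_diag hA.1.eigenvectorUnitary (Real.sqrt ∘ hA.1.eigenvalues)

lemma trace_eq_sum_eigenvalues {A : Matrix n n ℂ} (hA : A.IsHermitian) :
    A.trace = ∑ i, (hA.eigenvalues i : ℂ) := by
  conv_lhs => rw [hA.spectral_theorem]
  exact trace_unitary_diag hA.eigenvectorUnitary hA.eigenvalues


lemma trace_sqrt_mul_conjTranspose (M : Matrix m n ℂ) :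
    (Matrix.posSemidef_self_mul_conjTranspose M).sqrt.trace
      = ∑ i, (Real.sqrt ((Matrix.posSemidef_conjTranspose_mul_self M).1.eigenvalues i) : ℂ) := by
  set hσ := Matrix.posSemidef_conjTranspose_mul_self M with hσdef
  set dvec : n → ℝ := hσ.1.eigenvalues with hd
  have hdnn : ∀ k, 0 ≤ dvec k := fun k => hσ.eigenvalues_nonneg k
  set U : Matrix n n ℂ := (hσ.1.eigenvectorUnitary : Matrix n n ℂ) with hUdef
  have hUU : U * star U = 1 := Matrix.mem_unitaryGroup_iff.mp hσ.1.eigenvectorUnitary.2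
  have hU'U : star U * U = 1 := Matrix.mem_unitaryGroup_iff'.mp hσ.1.eigenvectorUnitary.2
  have hspec : Mᴴ * M = U * diagonal (Complex.ofReal ∘ dvec) * star U := hσ.1.spectral_theorem
  set N : Matrix m n ℂ := M * U with hNdef
  have hNH : Nᴴ = star U * Mᴴ := by
    rw [hNdef, Matrix.conjTranspose_mul, Matrix.star_eq_conjTranspose]
  have hNN : Nᴴ * N = diagonal (Complex.ofReal ∘ dvec) := by
    rw [hNH, hNdef]
    calc star U * Mᴴ * (M * U) = star U * (Mᴴ * M) * U := by
          simp only [Matrix.mul_assoc]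
      _ = (star U * U) * diagonal (Complex.ofReal ∘ dvec) * (star U * U) := by
          rw [hspec]; simp only [Matrix.mul_assoc]
      _ = diagonal (Complex.ofReal ∘ dvec) := by rw [hU'U, Matrix.one_mul, Matrix.mul_one]
  have hNNh : N * Nᴴ = M * Mᴴ := by
    rw [hNH, hNdef, Matrix.mul_assoc, ← Matrix.mul_assoc U, hUU, Matrix.one_mul]
  have hDN : ∀ (e : n → ℂ) (i j : m),
      (N * diagonal e * Nᴴ) i j = ∑ k, N i k * e k * star (N j k) := by
    intro e i j
    simp [Matrix.mul_apply, Matrix.diagonal_apply, Matrix.conjTranspose_apply,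
      mul_ite, ite_mul, mul_zero, zero_mul, Finset.sum_ite_eq, Finset.sum_ite_eq']
  have hcol : ∀ k, dvec k = 0 → ∀ i, N i k = 0 := by
    intro k hk i
    have h1 : (Nᴴ * N) k k = (dvec k : ℂ) := by rw [hNN]; simp
    have h2 : (Nᴴ * N) k k = ∑ j, (Complex.normSq (N j k) : ℂ) := by
      simp only [Matrix.mul_apply, Matrix.conjTranspose_apply]
      congr 1; funext j
      rw [Complex.normSq_eq_conj_mul_self]; rfl
    have h3 : ∑ j, Complex.normSq (N j k) = 0 := by
      have := h1.symm.trans h2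
      have := congrArg Complex.re this
      simpa [hk, Complex.ofReal_sum] using this.symm
    have h4 := (Finset.sum_eq_zero_iff_of_nonneg
      (fun j _ => Complex.normSq_nonneg (N j k))).mp h3 i (Finset.mem_univ i)
    exact Complex.normSq_eq_zero.mp h4
  set c : n → ℝ := fun k => if dvec k = 0 then 0 else (Real.sqrt (dvec k))⁻¹ with hc
  set Q : Matrix m m ℂ := N * diagonal (Complex.ofReal ∘ c) * Nᴴ with hQ
  have hcnn : ∀ k, 0 ≤ c k := by
    intro k; rw [hc]; dsimp only
    split
    · exact le_refl 0
    · positivity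
  have hsne : ∀ k, dvec k ≠ 0 → Real.sqrt (dvec k) ≠ 0 := fun k hk =>
    Real.sqrt_ne_zero'.mpr (lt_of_le_of_ne (hdnn k) (Ne.symm hk))
  have hDpsd : (diagonal (Complex.ofReal ∘ c)).PosSemidef := by
    refine posSemidef_diagonal_iff.mpr fun k => ?_
    simp only [Function.comp_apply]
    exact_mod_cast hcnn k
  have hQpsd : Q.PosSemidef := hDpsd.mul_mul_conjTranspose_same N
  have hQsq : Q ^ 2 = M * Mᴴ := by
    have assoc : Q * Q = N * (diagonal (Complex.ofReal ∘ c) * (Nᴴ * N)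
        * diagonal (Complex.ofReal ∘ c)) * Nᴴ := by
      rw [hQ]; simp only [Matrix.mul_assoc]
    rw [sq, assoc, hNN, Matrix.diagonal_mul_diagonal, Matrix.diagonal_mul_diagonal, ← hNNh]
    have hDN1 : ∀ i j : m, (N * Nᴴ) i j = ∑ k, N i k * star (N j k) := by
      intro i j; simp [Matrix.mul_apply, Matrix.conjTranspose_apply]
    ext i j
    rw [hDN, hDN1]
    refine Finset.sum_congr rfl fun k _ => ?_
    by_cases hk : dvec k = 0
    · simp [hcol k hk i]
    · have hck : c k = (Real.sqrt (dvec k))⁻¹ := if_neg hk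
      have h1 : (Complex.ofReal ∘ c) k * (Complex.ofReal ∘ dvec) k * (Complex.ofReal ∘ c) k
          = 1 := by
        simp only [Function.comp_apply]
        norm_cast
        rw [hck, ← Real.mul_self_sqrt (hdnn k)]
        field_simp
        rw [Real.sqrt_sq (Real.sqrt_nonneg _)]
        exact div_self (pow_ne_zero 2 (hsne k hk))
      rw [h1, mul_one]
  have hQsqrt : Q = (Matrix.posSemidef_self_mul_conjTranspose M).sqrt :=
    hQpsd.eq_sqrt_of_sq_eq _ hQsq
  rw [← hQsqrt, hQ, Matrix.trace_mul_cycle, hNN, Matrix.diagonal_mul_diagonal,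
    Matrix.trace_diagonal]
  refine Finset.sum_congr rfl fun k _ => ?_
  simp only [Pi.mul_apply, Function.comp_apply]
  norm_cast
  by_cases hk : dvec k = 0
  · simp [hc, hk]
  · have hck : c k = (Real.sqrt (dvec k))⁻¹ := if_neg hk
    rw [hck]
    nth_rewrite 1 [← Real.mul_self_sqrt (hdnn k)]
    field_simp

end RenyiAux

/-- Mixture entropy bound for the Rényi-1/2 entropy: for a mixture
`ρ̄ = ∑_λ φ_λ |φ_λ⟩⟨φ_λ|` of (not necessarily orthogonal) pure states with probability
weights `φ_λ`, `H_{1/2}(ρ̄) ≤ H_{1/2}(φ) = 2 log₂ ∑_λ √φ_λ`. -/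
theorem renyi_half_mixture_bound {d K : ℕ}
    (φ : Fin K → ℝ) (hφ : ∀ l, 0 ≤ φ l) (hφ1 : ∑ l, φ l = 1)
    (v : Fin K → Fin d → ℂ) (hv : ∀ l, ∑ j, Complex.normSq (v l j) = 1) :
    renyiHalf (∑ l, φ l • Matrix.vecMulVec (v l) (fun j => star (v l j)))
      ≤ 2 * Real.logb 2 (∑ l, Real.sqrt (φ l)) := by
  classical
  set M : Matrix (Fin d) (Fin K) ℂ := Matrix.of fun j l => (Real.sqrt (φ l) : ℂ) * v l j with hM
  set ρ : Matrix (Fin d) (Fin d) ℂ :=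
    ∑ l, φ l • Matrix.vecMulVec (v l) (fun j => star (v l j)) with hρdef
  have hρM : ρ = M * Mᴴ := by
    ext i j
    simp only [hρdef, Matrix.sum_apply, Matrix.smul_apply, Matrix.vecMulVec_apply,
      Matrix.mul_apply, Matrix.conjTranspose_apply, Matrix.of_apply, hM]
    refine Finset.sum_congr rfl fun l _ => ?_
    have h1 : star ((Real.sqrt (φ l) : ℂ) * v l j)
        = (Real.sqrt (φ l) : ℂ) * star (v l j) := by
      rw [star_mul']
      simp [Complex.star_def, Complex.conj_ofReal]
    rw [h1, Complex.real_smul]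
    have h2 : ((φ l : ℝ) : ℂ) = (Real.sqrt (φ l) : ℂ) * (Real.sqrt (φ l) : ℂ) := by
      norm_cast
      exact (Real.mul_self_sqrt (hφ l)).symm
    rw [h2]
    ring
  have hρpsd : ρ.PosSemidef := hρM ▸ Matrix.posSemidef_self_mul_conjTranspose M
  have hmsqrt : msqrt ρ = (Matrix.posSemidef_self_mul_conjTranspose M).sqrt := by
    have h2 : ρ ^ 2 = ρᴴ * ρ := by rw [hρpsd.1, sq]
    have h1 : ρ = (Matrix.posSemidef_conjTranspose_mul_self ρ).sqrt :=
      hρpsd.eq_sqrt_of_sq_eq _ h2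
    unfold msqrt
    exact RenyiAux.sqrt_congr (h1.symm.trans hρM) (Matrix.PosSemidef.posSemidef_sqrt _) _
  set hσ := Matrix.posSemidef_conjTranspose_mul_self M with hσdef
  set dvec : Fin K → ℝ := hσ.1.eigenvalues with hdvec
  have htre : ((msqrt ρ).trace).re = ∑ i, Real.sqrt (dvec i) := by
    rw [hmsqrt, RenyiAux.trace_sqrt_mul_conjTranspose M, ← Complex.ofReal_sum,
      Complex.ofReal_re]
  have hσdiag : ∀ l, (Mᴴ * M) l l = (φ l : ℂ) := by
    intro l
    simp only [Matrix.mul_apply, Matrix.conjTranspose_apply, hM, Matrix.of_apply]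
    have h1 : ∀ j, star ((Real.sqrt (φ l) : ℂ) * v l j) * ((Real.sqrt (φ l) : ℂ) * v l j)
        = (φ l : ℂ) * (Complex.normSq (v l j) : ℂ) := by
      intro j
      rw [star_mul', Complex.star_def, Complex.conj_ofReal,
        Complex.normSq_eq_conj_mul_self]
      have h2 : ((φ l : ℝ) : ℂ) = (Real.sqrt (φ l) : ℂ) * (Real.sqrt (φ l) : ℂ) := by
        norm_cast
        exact (Real.mul_self_sqrt (hφ l)).symm
      rw [h2]
      ring
    rw [Finset.sum_congr rfl (fun j _ => h1 j), ← Finset.mul_sum, ← Complex.ofReal_sum, hv l]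
    simp
  have hd_nonneg : ∀ i, 0 ≤ dvec i := fun i => hσ.eigenvalues_nonneg i
  have hsum_d : ∑ i, dvec i = 1 := by
    have h1 : (Mᴴ * M).trace = ∑ i, (dvec i : ℂ) := RenyiAux.trace_eq_sum_eigenvalues hσ.1
    have h2 : (Mᴴ * M).trace = (1 : ℂ) := by
      rw [Matrix.trace]
      simp only [Matrix.diag_apply]
      rw [Finset.sum_congr rfl (fun l _ => hσdiag l), ← Complex.ofReal_sum, hφ1,
        Complex.ofReal_one]
    have h3 : ((∑ i, dvec i : ℝ) : ℂ) = ((1 : ℝ) : ℂ) := by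
      rw [Complex.ofReal_sum, ← h1, h2, Complex.ofReal_one]
    exact_mod_cast h3
  have hlower : 1 ≤ ∑ i, Real.sqrt (dvec i) := by
    have h1 : ∑ i, (Real.sqrt (dvec i)) ^ 2 = 1 := by
      rw [← hsum_d]
      exact Finset.sum_congr rfl fun i _ => Real.sq_sqrt (hd_nonneg i)
    have h2 := Finset.sum_sq_le_sq_sum_of_nonneg
      (f := fun i => Real.sqrt (dvec i)) (s := Finset.univ)
      (fun i _ => Real.sqrt_nonneg (dvec i))
    nlinarith [Finset.sum_nonneg (fun i (_ : i ∈ Finset.univ) => Real.sqrt_nonneg (dvec i))]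
  set P := hσ.sqrt with hPdef
  have hPtr : P.trace = ∑ i, (Real.sqrt (dvec i) : ℂ) := RenyiAux.trace_sqrt_eq hσ
  have hPP : P * P = Mᴴ * M := hσ.sqrt_mul_self
  have hPh : P.IsHermitian := hσ.posSemidef_sqrt.1
  have hPdiagsum : ∀ l, ∑ k, Complex.normSq (P l k) = φ l := by
    intro l
    have h1 : (P * P) l l = (φ l : ℂ) := by rw [hPP]; exact hσdiag l
    have h2 : (P * P) l l = ∑ k, (Complex.normSq (P l k) : ℂ) := by
      rw [Matrix.mul_apply]
      refine Finset.sum_congr rfl fun k _ => ?_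
      have h3 : P k l = star (P l k) := by
        conv_lhs => rw [← hPh.eq]
        simp [Matrix.conjTranspose_apply]
      rw [h3]
      exact Complex.mul_conj _
    have h4 : ((∑ k, Complex.normSq (P l k) : ℝ) : ℂ) = ((φ l : ℝ) : ℂ) := by
      rw [Complex.ofReal_sum, ← h2, h1]
    exact_mod_cast h4
  have hPl : ∀ l, (P l l).re ≤ Real.sqrt (φ l) := by
    intro l
    have h1 : Complex.normSq (P l l) ≤ φ l := by
      rw [← hPdiagsum l]
      exact Finset.single_le_sum (fun k _ => Complex.normSq_nonneg _) (Finset.mem_univ l)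
    calc (P l l).re ≤ ‖P l l‖ := Complex.re_le_norm _
      _ = Real.sqrt (Complex.normSq (P l l)) := Complex.norm_def _
      _ ≤ Real.sqrt (φ l) := Real.sqrt_le_sqrt h1
  have hupper : ∑ i, Real.sqrt (dvec i) ≤ ∑ l, Real.sqrt (φ l) := by
    have h1 : ∑ i, Real.sqrt (dvec i) = (P.trace).re := by
      rw [hPtr, ← Complex.ofReal_sum, Complex.ofReal_re]
    rw [h1, Matrix.trace]
    rw [Complex.re_sum]
    exact Finset.sum_le_sum fun l _ => hPl l
  have hpos : 0 < ∑ i, Real.sqrt (dvec i) := lt_of_lt_of_le one_pos hlower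
  unfold renyiHalf
  rw [htre]
  have := Real.logb_le_logb_of_le (b := 2) (by norm_num) hpos hupper
  linarith
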